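/- arXiv:1704.04608 — 3 statements merged into one kernel-verified Lean document; each statement's English description precedes it below -/
import Mathlib

section
/- Let (Ā,B̄) be a structured system with n states and q non-top-linked SCCs in the state digraph, and let F(Ā,B̄) be the associated flow network of Algorithm 1. Then (Ā,B̄) is structurally controllable (i.e., all states accessible and B(Ā,B̄) has a perfect matching of the x'-vertices) if and only if the maximum s–t flow value in F(Ā,B̄) is at least q + n. -/
open scoped Classical

/-- Vertices of the flow network `F(Ā,B̄)` of Algorithm 1: source `s`, sink `t`,
one vertex `N i` per non-top-linked SCC, right copies `xp k` of states, states
`x r`, inputs `u j`, and input copies `up j`. -/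
inductive FV (n m q : ℕ) : Type
  | s : FV n m q
  | t : FV n m q
  | N : Fin q → FV n m q
  | xp : Fin n → FV n m q
  | x : Fin n → FV n m q
  | u : Fin m → FV n m q
  | up : Fin m → FV n m q
  deriving DecidableEq, Fintype

variable {n m q : ℕ}

/-- Capacities of the flow network `F(Ā,B̄)`: all edges have capacity `1`,
except the edges `(u'_j, t)` which have capacity `n+1`; non-edges have
capacity `0`. `memN i r` says state `x_r` belongs to the non-top-linked SCC
`N_i`. -/
noncomputable def cap (A : Fin n → Fin n → Bool) (B : Fin n → Fin m → Bool)
    (memN : Fin q → Fin n → Bool) : FV n m q → FV n m q → ℕ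
  | FV.s, FV.N _ => 1
  | FV.s, FV.xp _ => 1
  | FV.N i, FV.up j => if ∃ r : Fin n, memN i r = true ∧ B r j = true then 1 else 0
  | FV.xp k, FV.x r => if A k r = true then 1 else 0
  | FV.xp k, FV.u j => if B k j = true then 1 else 0
  | FV.u j, FV.up j' => if j = j' then 1 else 0
  | FV.up _, FV.t => n + 1
  | FV.x _, FV.t => 1
  | _, _ => 0

/-- A feasible flow vector on `F(Ā,B̄)`: nonnegative, capacity-respecting, and
conserving flow at every vertex other than `s` and `t`. -/
def Feasible (b : FV n m q → FV n m q → ℕ) (f : FV n m q → FV n m q → ℝ) : Prop :=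
  (∀ a c, 0 ≤ f a c) ∧ (∀ a c, f a c ≤ (b a c : ℝ)) ∧
    ∀ v : FV n m q, v ≠ FV.s → v ≠ FV.t → ∑ a, f a v = ∑ c, f v c

/-- Value of a flow: total flow out of the source. -/
noncomputable def value (f : FV n m q → FV n m q → ℝ) : ℝ := ∑ v, f FV.s v

/-- Edge relation of the system bipartite graph `B(Ā,B̄)`. -/
def bipE (A : Fin n → Fin n → Bool) (B : Fin n → Fin m → Bool) :
    Fin n ⊕ Fin m → Fin n → Prop
  | Sum.inl r, k => A k r = true
  | Sum.inr j, k => B k j = true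

/-- Structural controllability of `(Ā,B̄)` (characterization used throughout the
paper): every non-top-linked SCC `N_i` receives an edge from some input, and
`B(Ā,B̄)` has a matching saturating the right vertices `x'₁,…,x'ₙ`. -/
def SCchar (A : Fin n → Fin n → Bool) (B : Fin n → Fin m → Bool)
    (memN : Fin q → Fin n → Bool) : Prop :=
  (∀ i : Fin q, ∃ j : Fin m, ∃ r : Fin n, memN i r = true ∧ B r j = true) ∧
    ∃ M : Fin n → Fin n ⊕ Fin m, Function.Injective M ∧ ∀ k : Fin n, bipE A B (M k) k

/- ======================= auxiliary lemmas ======================= -/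
open Finset

def FVe (n m q : ℕ) : FV n m q ≃ (Unit ⊕ Unit ⊕ Fin q ⊕ Fin n ⊕ Fin n ⊕ Fin m ⊕ Fin m) where
  toFun v := match v with
    | .s => .inl ()
    | .t => .inr (.inl ())
    | .N i => .inr (.inr (.inl i))
    | .xp k => .inr (.inr (.inr (.inl k)))
    | .x r => .inr (.inr (.inr (.inr (.inl r))))
    | .u j => .inr (.inr (.inr (.inr (.inr (.inl j)))))
    | .up j => .inr (.inr (.inr (.inr (.inr (.inr j)))))
  invFun v := match v with
    | .inl () => .s
    | .inr (.inl ()) => .t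
    | .inr (.inr (.inl i)) => .N i
    | .inr (.inr (.inr (.inl k))) => .xp k
    | .inr (.inr (.inr (.inr (.inl r)))) => .x r
    | .inr (.inr (.inr (.inr (.inr (.inl j))))) => .u j
    | .inr (.inr (.inr (.inr (.inr (.inr j))))) => .up j
  left_inv v := by cases v <;> rfl
  right_inv v := by rcases v with _ | (_ | (_ | (_ | (_ | (_ | _))))) <;> rfl

lemma sum_FV (g : FV n m q → ℝ) :
    ∑ v, g v = g .s + g .t + (∑ i, g (.N i)) + (∑ k, g (.xp k)) + (∑ r, g (.x r))
      + (∑ j, g (.u j)) + (∑ j, g (.up j)) := by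
  rw [← Equiv.sum_comp (FVe n m q).symm g]
  simp [Fintype.sum_sum_type, FVe]
  ring

lemma all_eq_one {α : Type*} [Fintype α] (g : α → ℝ) (h1 : ∀ a, g a ≤ 1)
    (h2 : (Fintype.card α : ℝ) ≤ ∑ a, g a) : ∀ a, g a = 1 := by
  have hnn : ∀ a ∈ (univ : Finset α), 0 ≤ 1 - g a := fun a _ => by linarith [h1 a]
  have hz : ∑ a, (1 - g a) = 0 := by
    have hle : ∑ a, (1 - g a) ≤ 0 := by
      rw [Finset.sum_sub_distrib]
      simp only [Finset.sum_const, Finset.card_univ, nsmul_eq_mul, mul_one]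
      linarith
    exact le_antisymm hle (Finset.sum_nonneg hnn)
  intro a
  have := (Finset.sum_eq_zero_iff_of_nonneg hnn).1 hz a (mem_univ a)
  linarith

noncomputable def flowOf (M : Fin n → Fin n ⊕ Fin m) (jj : Fin q → Fin m) :
    FV n m q → FV n m q → ℝ := fun a c =>
  match a, c with
  | .s, .N _ => 1
  | .s, .xp _ => 1
  | .N i, .up j => if jj i = j then 1 else 0
  | .xp k, .x r => if M k = Sum.inl r then 1 else 0
  | .xp k, .u j => if M k = Sum.inr j then 1 else 0
  | .u j, .up j' => if j = j' then ((univ.filter fun k => M k = Sum.inr j).card : ℝ) else 0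
  | .up j, .t => ((univ.filter fun i => jj i = j).card : ℝ)
      + ((univ.filter fun k => M k = Sum.inr j).card : ℝ)
  | .x r, .t => ((univ.filter fun k => M k = Sum.inl r).card : ℝ)
  | _, _ => 0

lemma card_filter_le_one {α β : Type*} [Fintype α] {M : α → β}
    (h : Function.Injective M) (c : β) [DecidablePred (fun k => M k = c)] :
    (univ.filter fun k => M k = c).card ≤ 1 := by
  refine Finset.card_le_one.2 fun a ha b hb => ?_
  simp only [mem_filter] at ha hb
  exact h (ha.2.trans hb.2.symm)

/-- Theorem 1. Let `(Ā,B̄)` be a structured system with `n`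
states and `q` non-top-linked SCCs (given by `memN`) in the state digraph.
Then `(Ā,B̄)` is structurally controllable (all non-top-linked SCCs receive an
input edge and `B(Ā,B̄)` has a perfect matching of the `x'`-vertices) if and
only if the maximum `s`–`t` flow value in `F(Ā,B̄)` is at least `q + n`, i.e.
there is a feasible flow of value at least `q + n`. -/
theorem stmt10 (A : Fin n → Fin n → Bool) (B : Fin n → Fin m → Bool)
    (memN : Fin q → Fin n → Bool) (hq : q ≤ n) :
    SCchar A B memN ↔
      ∃ f : FV n m q → FV n m q → ℝ,
        Feasible (cap A B memN) f ∧ ((q : ℝ) + n) ≤ value f := by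
  constructor
  · rintro ⟨h1, M, hMinj, hMe⟩
    choose jj rr hmem hB using h1
    refine ⟨flowOf M jj, ⟨?_, ?_, ?_⟩, ?_⟩
    · -- nonneg
      intro a c
      cases a <;> cases c <;> simp only [flowOf] <;>
        first
        | positivity
        | (split_ifs <;> positivity)
    · -- capacity
      intro a c
      cases a <;> cases c <;> simp only [flowOf, cap]
      case s.N => norm_num
      case s.xp => norm_num
      case N.up i j =>
        split_ifs with h h2
        · norm_num
        · exact absurd ⟨rr i, hmem i, h ▸ hB i⟩ h2
        · positivity
        · positivity
      case xp.x k r =>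
        split_ifs with h h2
        · norm_num
        · have := hMe k; rw [h] at this; exact absurd this h2
        · positivity
        · positivity
      case xp.u k j =>
        split_ifs with h h2
        · norm_num
        · have := hMe k; rw [h] at this; exact absurd this h2
        · positivity
        · positivity
      case u.up j j' =>
        split_ifs with h
        · exact_mod_cast card_filter_le_one hMinj _
        · positivity
      case x.t r =>
        exact_mod_cast card_filter_le_one hMinj _
      case up.t j =>
        have h1' : (univ.filter fun i => jj i = j).card ≤ q := by
          calc (univ.filter fun i => jj i = j).card ≤ (univ : Finset (Fin q)).card :=
                card_filter_le _ _
            _ = q := by simp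
        have h2' : (univ.filter fun k => M k = Sum.inr j).card ≤ 1 :=
          card_filter_le_one hMinj _
        have e0 : (q : ℝ) ≤ n := by exact_mod_cast hq
        have e1 : ((univ.filter fun i => jj i = j).card : ℝ) ≤ q := by exact_mod_cast h1'
        have e2 : ((univ.filter fun k => M k = Sum.inr j).card : ℝ) ≤ 1 := by exact_mod_cast h2'
        push_cast
        linarith
      all_goals positivity
    · -- conservation
      intro v hvs hvt
      cases v with
      | s => exact absurd rfl hvs
      | t => exact absurd rfl hvt
      | N i =>
          rw [sum_FV (fun a => flowOf M jj a (FV.N i)), sum_FV (flowOf M jj (FV.N i))]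
          simp [flowOf, Finset.sum_ite_eq, Finset.sum_ite_eq']
      | xp k =>
          rw [sum_FV (fun a => flowOf M jj a (FV.xp k)), sum_FV (flowOf M jj (FV.xp k))]
          rcases hMk : M k with r0 | j0 <;>
            simp [flowOf, hMk, Finset.sum_ite_eq, Finset.sum_ite_eq']
      | x r =>
          rw [sum_FV (fun a => flowOf M jj a (FV.x r)), sum_FV (flowOf M jj (FV.x r))]
          simp [flowOf, Finset.sum_boole]
      | u j =>
          rw [sum_FV (fun a => flowOf M jj a (FV.u j)), sum_FV (flowOf M jj (FV.u j))]
          simp [flowOf, Finset.sum_boole, Finset.sum_ite_eq, Finset.sum_ite_eq']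
      | up j =>
          rw [sum_FV (fun a => flowOf M jj a (FV.up j)), sum_FV (flowOf M jj (FV.up j))]
          simp [flowOf, Finset.sum_boole, Finset.sum_ite_eq, Finset.sum_ite_eq']
    · -- value
      have : value (flowOf M jj) = q + n := by
        rw [value, sum_FV (flowOf M jj FV.s)]
        simp [flowOf]
      rw [this]
  · rintro ⟨f, ⟨hpos, hcap, hcons⟩, hval⟩
    have fzero : ∀ a c, cap A B memN a c = 0 → f a c = 0 := fun a c h =>
      le_antisymm (by simpa [h] using hcap a c) (hpos a c)
    -- the value is exactly the flow on the source edges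
    have hv : value f = (∑ i, f .s (.N i)) + ∑ k, f .s (.xp k) := by
      rw [value, sum_FV (f FV.s)]
      rw [fzero .s .s rfl, fzero .s .t rfl,
        Finset.sum_eq_zero (fun r _ => fzero .s (.x r) rfl),
        Finset.sum_eq_zero (fun j _ => fzero .s (.u j) rfl),
        Finset.sum_eq_zero (fun j _ => fzero .s (.up j) rfl)]
      ring
    -- all source edges are saturated
    have hsat : ∀ z : Fin q ⊕ Fin n,
        Sum.elim (fun i => f .s (.N i)) (fun k => f .s (.xp k)) z = 1 := by
      apply all_eq_one
      · rintro (i | k)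
        · have h := hcap .s (.N i)
          rw [show cap A B memN .s (.N i) = 1 from rfl] at h
          simpa using h
        · have h := hcap .s (.xp k)
          rw [show cap A B memN .s (.xp k) = 1 from rfl] at h
          simpa using h
      · rw [Fintype.sum_sum_type]
        simp only [Sum.elim_inl, Sum.elim_inr, Fintype.card_sum, Fintype.card_fin]
        rw [← hv]
        push_cast
        linarith
    have hN1 : ∀ i, f .s (.N i) = 1 := fun i => hsat (Sum.inl i)
    have hxp1 : ∀ k, f .s (.xp k) = 1 := fun k => hsat (Sum.inr k)
    constructor
    · -- every non-top-linked SCC gets an input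
      intro i
      have hin : ∑ a, f a (FV.N i) = f .s (.N i) := by
        rw [sum_FV (fun a => f a (FV.N i))]
        rw [fzero .t (.N i) rfl,
          Finset.sum_eq_zero (fun i' _ => fzero (.N i') (.N i) rfl),
          Finset.sum_eq_zero (fun k _ => fzero (.xp k) (.N i) rfl),
          Finset.sum_eq_zero (fun r _ => fzero (.x r) (.N i) rfl),
          Finset.sum_eq_zero (fun j _ => fzero (.u j) (.N i) rfl),
          Finset.sum_eq_zero (fun j _ => fzero (.up j) (.N i) rfl)]
        ring
      have hout : ∑ c, f (FV.N i) c = ∑ j, f (.N i) (.up j) := by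
        rw [sum_FV (f (FV.N i))]
        rw [fzero (.N i) .s rfl, fzero (.N i) .t rfl,
          Finset.sum_eq_zero (fun i' _ => fzero (.N i) (.N i') rfl),
          Finset.sum_eq_zero (fun k _ => fzero (.N i) (.xp k) rfl),
          Finset.sum_eq_zero (fun r _ => fzero (.N i) (.x r) rfl),
          Finset.sum_eq_zero (fun j _ => fzero (.N i) (.u j) rfl)]
        ring
      have hc' := hcons (.N i) (by intro h; cases h) (by intro h; cases h)
      rw [hin, hout, hN1 i] at hc'
      have : ∃ j, 0 < f (.N i) (.up j) := by
        by_contra hno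
        push_neg at hno
        have : ∑ j, f (.N i) (.up j) = 0 :=
          Finset.sum_eq_zero fun j _ => le_antisymm (hno j) (hpos _ _)
        rw [this] at hc'
        norm_num at hc'
      obtain ⟨j, hj⟩ := this
      refine ⟨j, ?_⟩
      by_contra hcon
      have : cap A B memN (.N i) (.up j) = 0 := by
        simp only [cap]
        exact if_neg hcon
      rw [fzero _ _ this] at hj
      norm_num at hj
    · -- perfect matching via Hall
      set t' : Fin n → Finset (Fin n ⊕ Fin m) :=
        fun k => univ.filter (fun y => bipE A B y k) with ht'
      set g : Fin n → (Fin n ⊕ Fin m) → ℝ :=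
        fun k y => Sum.elim (fun r => f (.xp k) (.x r)) (fun j => f (.xp k) (.u j)) y with hg
      have gnn : ∀ k y, 0 ≤ g k y := by rintro k (r | j) <;> exact hpos _ _
      have gsupp : ∀ k y, y ∉ t' k → g k y = 0 := by
        rintro k (r | j) hy <;> simp only [ht', mem_filter, mem_univ, true_and] at hy
        · exact fzero (.xp k) (.x r) (by simp only [cap]; exact if_neg hy)
        · exact fzero (.xp k) (.u j) (by simp only [cap]; exact if_neg hy)
      have grow : ∀ k, ∑ y, g k y = 1 := by
        intro k
        have hc := hcons (.xp k) (by intro h; cases h) (by intro h; cases h)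
        have hin : ∑ a, f a (FV.xp k) = f .s (.xp k) := by
          rw [sum_FV (fun a => f a (FV.xp k))]
          rw [fzero .t (.xp k) rfl,
            Finset.sum_eq_zero (fun i' _ => fzero (.N i') (.xp k) rfl),
            Finset.sum_eq_zero (fun k' _ => fzero (.xp k') (.xp k) rfl),
            Finset.sum_eq_zero (fun r _ => fzero (.x r) (.xp k) rfl),
            Finset.sum_eq_zero (fun j _ => fzero (.u j) (.xp k) rfl),
            Finset.sum_eq_zero (fun j _ => fzero (.up j) (.xp k) rfl)]
          ring
        have hout : ∑ c, f (FV.xp k) c = (∑ r, f (.xp k) (.x r)) + ∑ j, f (.xp k) (.u j) := by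
          rw [sum_FV (f (FV.xp k))]
          rw [fzero (.xp k) .s rfl, fzero (.xp k) .t rfl,
            Finset.sum_eq_zero (fun i' _ => fzero (.xp k) (.N i') rfl),
            Finset.sum_eq_zero (fun k' _ => fzero (.xp k) (.xp k') rfl),
            Finset.sum_eq_zero (fun j _ => fzero (.xp k) (.up j) rfl)]
          ring
        rw [hin, hout, hxp1 k] at hc
        rw [Fintype.sum_sum_type]
        simpa [hg] using hc.symm
      have gcol : ∀ y, ∑ k, g k y ≤ 1 := by
        rintro (r | j)
        · have hc := hcons (.x r) (by intro h; cases h) (by intro h; cases h)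
          have hin : ∑ a, f a (FV.x r) = ∑ k, f (.xp k) (.x r) := by
            rw [sum_FV (fun a => f a (FV.x r))]
            rw [fzero .s (.x r) rfl, fzero .t (.x r) rfl,
              Finset.sum_eq_zero (fun i' _ => fzero (.N i') (.x r) rfl),
              Finset.sum_eq_zero (fun r' _ => fzero (.x r') (.x r) rfl),
              Finset.sum_eq_zero (fun j _ => fzero (.u j) (.x r) rfl),
              Finset.sum_eq_zero (fun j _ => fzero (.up j) (.x r) rfl)]
            ring
          have hout : ∑ c, f (FV.x r) c = f (.x r) .t := by
            rw [sum_FV (f (FV.x r))]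
            rw [fzero (.x r) .s rfl,
              Finset.sum_eq_zero (fun i' _ => fzero (.x r) (.N i') rfl),
              Finset.sum_eq_zero (fun k' _ => fzero (.x r) (.xp k') rfl),
              Finset.sum_eq_zero (fun r' _ => fzero (.x r) (.x r') rfl),
              Finset.sum_eq_zero (fun j _ => fzero (.x r) (.u j) rfl),
              Finset.sum_eq_zero (fun j _ => fzero (.x r) (.up j) rfl)]
            ring
          rw [hin, hout] at hc
          have := hcap (.x r) .t
          simp only [cap, Nat.cast_one] at this
          calc ∑ k, g k (Sum.inl r) = ∑ k, f (.xp k) (.x r) := rfl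
            _ = f (.x r) .t := hc
            _ ≤ 1 := this
        · have hc := hcons (.u j) (by intro h; cases h) (by intro h; cases h)
          have hin : ∑ a, f a (FV.u j) = ∑ k, f (.xp k) (.u j) := by
            rw [sum_FV (fun a => f a (FV.u j))]
            rw [fzero .s (.u j) rfl, fzero .t (.u j) rfl,
              Finset.sum_eq_zero (fun i' _ => fzero (.N i') (.u j) rfl),
              Finset.sum_eq_zero (fun r' _ => fzero (.x r') (.u j) rfl),
              Finset.sum_eq_zero (fun j' _ => fzero (.u j') (.u j) rfl),
              Finset.sum_eq_zero (fun j' _ => fzero (.up j') (.u j) rfl)]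
            ring
          have hout : ∑ c, f (FV.u j) c = f (.u j) (.up j) := by
            rw [sum_FV (f (FV.u j))]
            rw [fzero (.u j) .s rfl, fzero (.u j) .t rfl,
              Finset.sum_eq_zero (fun i' _ => fzero (.u j) (.N i') rfl),
              Finset.sum_eq_zero (fun k' _ => fzero (.u j) (.xp k') rfl),
              Finset.sum_eq_zero (fun r' _ => fzero (.u j) (.x r') rfl),
              Finset.sum_eq_zero (fun j' _ => fzero (.u j) (.u j') rfl)]
            rw [Finset.sum_eq_single j]
            · ring
            · intro j' _ hj'
              exact fzero (.u j) (.up j') (by simp only [cap]; rw [if_neg (Ne.symm hj')])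
            · intro h; exact absurd (mem_univ j) h
          rw [hin, hout] at hc
          have : f (.u j) (.up j) ≤ 1 := by simpa [cap] using hcap (.u j) (.up j)
          calc ∑ k, g k (Sum.inr j) = ∑ k, f (.xp k) (.u j) := rfl
            _ = f (.u j) (.up j) := hc
            _ ≤ 1 := this
      have hall : ∀ S : Finset (Fin n), S.card ≤ (S.biUnion t').card := by
        intro S
        have hreal : (S.card : ℝ) ≤ ((S.biUnion t').card : ℝ) := by
          calc (S.card : ℝ) = ∑ k ∈ S, (1 : ℝ) := by simp
            _ = ∑ k ∈ S, ∑ y ∈ S.biUnion t', g k y := by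
                refine Finset.sum_congr rfl fun k hk => ?_
                rw [← grow k]
                exact (Finset.sum_subset (Finset.subset_univ _)
                  (fun y _ hy => gsupp k y
                    (fun h => hy (Finset.mem_biUnion.2 ⟨k, hk, h⟩)))).symm ▸ rfl
            _ = ∑ y ∈ S.biUnion t', ∑ k ∈ S, g k y := Finset.sum_comm
            _ ≤ ∑ y ∈ S.biUnion t', (1 : ℝ) := by
                refine Finset.sum_le_sum fun y _ => ?_
                calc ∑ k ∈ S, g k y ≤ ∑ k, g k y :=
                      Finset.sum_le_sum_of_subset_of_nonneg (Finset.subset_univ S)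
                        (fun k _ _ => gnn k y)
                  _ ≤ 1 := gcol y
            _ = ((S.biUnion t').card : ℝ) := by simp
        exact_mod_cast hreal
      obtain ⟨M, hMinj, hMt⟩ :=
        (Finset.all_card_le_biUnion_card_iff_exists_injective t').1 hall
      refine ⟨M, hMinj, fun k => ?_⟩
      have := hMt k
      rw [ht'] at this
      simpa using (Finset.mem_filter.1 this).2
end

section
/- Let f be a feasible flow of value at least q+n in F(Ā,B̄) and define W_f = { j : f((u'_j,t)) > 0 }. Then the restricted system (Ā, B̄_{W_f}) is structurally controllable; equivalently, the flow network F(Ā, B̄_{W_f}) obtained by deleting inputs outside W_f still admits a flow of value q+n. -/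
open scoped Classical

variable {n m q : ℕ}

/-- Corollary 1. Let `f` be a feasible flow of value at least
`q+n` in `F(Ā,B̄)` and let `W_f = {j : f((u'_j,t)) > 0}`. Then the flow network
`F(Ā, B̄_{W_f})` of the system restricted to the inputs in `W_f` (obtained by
deleting all input columns outside `W_f`) still admits a feasible flow of value
at least `q+n`; equivalently, `(Ā, B̄_{W_f})` is structurally controllable. -/
theorem stmt11 (A : Fin n → Fin n → Bool) (B : Fin n → Fin m → Bool)
    (memN : Fin q → Fin n → Bool)
    (f : FV n m q → FV n m q → ℝ) (hf : Feasible (cap A B memN) f)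
    (hval : ((q : ℝ) + n) ≤ value f) :
    ∃ g : FV n m q → FV n m q → ℝ,
      Feasible (cap A (fun r j => B r j && decide (0 < f (FV.up j) FV.t)) memN) g ∧
        ((q : ℝ) + n) ≤ value g := by

  obtain ⟨hnn, hcap, hcons⟩ := hf
  -- If no flow leaves u'_j, then no flow enters u'_j.
  have hupt : ∀ j : Fin m, f (FV.up j) FV.t = 0 → ∀ a, f a (FV.up j) = 0 := by
    intro j hj a
    have capz : ∀ c, c ≠ (FV.t : FV n m q) → cap A B memN (FV.up j) c = 0 := by
      intro c hc; cases c <;> simp_all [cap]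
    have hout : ∑ c, f (FV.up j) c = 0 := by
      rw [Fintype.sum_eq_single (FV.t : FV n m q)]
      · exact hj
      · intro c hc
        refine le_antisymm ?_ (hnn _ _)
        have h1 := hcap (FV.up j) c
        rw [capz c hc] at h1
        simpa using h1
    have hin : ∑ a, f a (FV.up j) = 0 := by
      rw [hcons (FV.up j) (by simp) (by simp)]; exact hout
    exact (Finset.sum_eq_zero_iff_of_nonneg
      (fun a _ => hnn a (FV.up j))).mp hin a (Finset.mem_univ a)
  -- If no flow leaves u'_j, then no flow enters u_j either.
  have hu : ∀ j : Fin m, f (FV.up j) FV.t = 0 → ∀ a, f a (FV.u j) = 0 := by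
    intro j hj a
    have capz : ∀ c, c ≠ (FV.up j : FV n m q) → cap A B memN (FV.u j) c = 0 := by
      intro c hc
      cases c <;> simp_all [cap]
      rename_i j'
      intro h; exact hc (by rw [h])
    have hout : ∑ c, f (FV.u j) c = 0 := by
      rw [Fintype.sum_eq_single (FV.up j : FV n m q)]
      · exact hupt j hj (FV.u j)
      · intro c hc
        refine le_antisymm ?_ (hnn _ _)
        have h1 := hcap (FV.u j) c
        rw [capz c hc] at h1
        simpa using h1
    have hin : ∑ a, f a (FV.u j) = 0 := by
      rw [hcons (FV.u j) (by simp) (by simp)]; exact hout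
    exact (Finset.sum_eq_zero_iff_of_nonneg
      (fun a _ => hnn a (FV.u j))).mp hin a (Finset.mem_univ a)
  refine ⟨f, ⟨hnn, ?_, hcons⟩, hval⟩
  intro a c
  cases a <;> cases c <;> (try exact hcap _ _)
  case N.up i j =>
    by_cases h : 0 < f (FV.up j) FV.t
    · have hd : decide (0 < f (FV.up j) FV.t) = true := decide_eq_true h
      have := hcap (FV.N i) (FV.up j)
      simpa [cap, hd] using this
    · have h0 : f (FV.up j) FV.t = 0 := le_antisymm (not_lt.mp h) (hnn _ _)
      rw [hupt j h0 (FV.N i)]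
      exact Nat.cast_nonneg _
  case xp.u k j =>
    by_cases h : 0 < f (FV.up j) FV.t
    · have hd : decide (0 < f (FV.up j) FV.t) = true := decide_eq_true h
      have := hcap (FV.xp k) (FV.u j)
      simpa [cap, hd] using this
    · have h0 : f (FV.up j) FV.t = 0 := le_antisymm (not_lt.mp h) (hnn _ _)
      rw [hu j h0 (FV.xp k)]
      exact Nat.cast_nonneg _
end

section
/- If f is a feasible flow of value at least q+n in F(Ā,B̄,c), then the selected input set I_f = { j : f((u'_j,t)) > 0 } satisfies: (Ā, B̄_{I_f}) is structurally controllable and the input cost p(I_f) = Σ_{j∈I_f} p_u(j) equals the fixed-flow cost c_f = Σ_{e : f(e)>0} c(e). -/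
open scoped Classical

variable {n m q : ℕ}

/-- Edge costs on `F(Ā,B̄,c)`: the edge `(u'_j, t)` has cost `p j`, all other
edges have cost `0`. -/
def cost (p : Fin m → ℝ) : FV n m q → FV n m q → ℝ
  | FV.up j, FV.t => p j
  | _, _ => 0

/-- Fixed-flow cost of a flow `f`: the sum of the costs of the edges carrying
positive flow, `c_f = Σ_{e : f(e) > 0} c(e)`. -/
noncomputable def fixedCost (p : Fin m → ℝ) (f : FV n m q → FV n m q → ℝ) : ℝ :=
  ∑ a : FV n m q, ∑ c : FV n m q, if 0 < f a c then cost p a c else 0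

def fvEquiv (n m q : ℕ) :
    (Unit ⊕ Unit ⊕ Fin q ⊕ Fin n ⊕ Fin n ⊕ Fin m ⊕ Fin m) ≃ FV n m q where
  toFun v :=
    match v with
    | Sum.inl _ => FV.s
    | Sum.inr (Sum.inl _) => FV.t
    | Sum.inr (Sum.inr (Sum.inl i)) => FV.N i
    | Sum.inr (Sum.inr (Sum.inr (Sum.inl k))) => FV.xp k
    | Sum.inr (Sum.inr (Sum.inr (Sum.inr (Sum.inl r)))) => FV.x r
    | Sum.inr (Sum.inr (Sum.inr (Sum.inr (Sum.inr (Sum.inl j))))) => FV.u j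
    | Sum.inr (Sum.inr (Sum.inr (Sum.inr (Sum.inr (Sum.inr j))))) => FV.up j
  invFun v :=
    match v with
    | FV.s => Sum.inl ()
    | FV.t => Sum.inr (Sum.inl ())
    | FV.N i => Sum.inr (Sum.inr (Sum.inl i))
    | FV.xp k => Sum.inr (Sum.inr (Sum.inr (Sum.inl k)))
    | FV.x r => Sum.inr (Sum.inr (Sum.inr (Sum.inr (Sum.inl r))))
    | FV.u j => Sum.inr (Sum.inr (Sum.inr (Sum.inr (Sum.inr (Sum.inl j)))))
    | FV.up j => Sum.inr (Sum.inr (Sum.inr (Sum.inr (Sum.inr (Sum.inr j)))))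
  left_inv v := by
    rcases v with _ | _ | i | k | r | j | j <;> rfl
  right_inv v := by cases v <;> rfl

lemma sum_fv (g : FV n m q → ℝ) :
    ∑ v, g v = g FV.s + g FV.t + (∑ i, g (FV.N i)) + (∑ k, g (FV.xp k)) +
      (∑ r, g (FV.x r)) + (∑ j, g (FV.u j)) + (∑ j, g (FV.up j)) := by
  rw [← Equiv.sum_comp (fvEquiv n m q) g]
  simp [Fintype.sum_sum_type, fvEquiv]
  ring

example : cap (n:=2) (m:=2) (q:=1) (fun _ _ => true) (fun _ _ => true) (fun _ _ => true) FV.s FV.s = 0 := rfl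
example (A : Fin n → Fin n → Bool) (B : Fin n → Fin m → Bool)
    (memN : Fin q → Fin n → Bool) (i : Fin q) (k : Fin n) : cap A B memN (FV.N i) (FV.xp k) = 0 := rfl

noncomputable def selT (f : FV n m q → FV n m q → ℝ) (k : Fin n) :
    Finset (Fin n ⊕ Fin m) :=
  Finset.univ.filter fun l => 0 < f (FV.xp k) (Sum.elim FV.x FV.u l)


/-- Lemma 4. If `f` is a feasible flow of value at least
`q+n` in `F(Ā,B̄,c)`, then the selected input set `I_f = {j : f((u'_j,t)) > 0}`
satisfies: `(Ā, B̄_{I_f})` is structurally controllable, and the input cost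
`p(I_f) = Σ_{j ∈ I_f} p_u(j)` equals the fixed-flow cost
`c_f = Σ_{e : f(e)>0} c(e)`. -/
theorem stmt13 (A : Fin n → Fin n → Bool) (B : Fin n → Fin m → Bool)
    (memN : Fin q → Fin n → Bool) (hq : q ≤ n) (p : Fin m → ℝ)
    (f : FV n m q → FV n m q → ℝ) (hf : Feasible (cap A B memN) f)
    (hval : ((q : ℝ) + n) ≤ value f) :
    SCchar A (fun r j => B r j && decide (0 < f (FV.up j) FV.t)) memN ∧
      ∑ j ∈ Finset.univ.filter (fun j : Fin m => 0 < f (FV.up j) FV.t), p j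
        = fixedCost p f := by
  obtain ⟨hnn, hcap, hcons⟩ := hf
  -- flow vanishes on zero-capacity edges
  have hz : ∀ a c, cap A B memN a c = 0 → f a c = 0 := by
    intro a c h
    have := hcap a c
    rw [h] at this
    exact le_antisymm (by simpa using this) (hnn a c)
  -- value expansion
  have hvalue : value f = (∑ i, f FV.s (FV.N i)) + ∑ k, f FV.s (FV.xp k) := by
    have e := sum_fv (fun v => f FV.s v)
    rw [value, e, hz FV.s FV.s rfl, hz FV.s FV.t rfl,
      Finset.sum_eq_zero (fun r _ => hz FV.s (FV.x r) rfl),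
      Finset.sum_eq_zero (fun j _ => hz FV.s (FV.u j) rfl),
      Finset.sum_eq_zero (fun j _ => hz FV.s (FV.up j) rfl)]
    ring
  have hcapN : ∀ i, f FV.s (FV.N i) ≤ 1 := fun i => by
    have h := hcap FV.s (FV.N i)
    rw [show cap A B memN FV.s (FV.N i) = 1 from rfl] at h
    simpa using h
  have hcapXp : ∀ k, f FV.s (FV.xp k) ≤ 1 := fun k => by
    have h := hcap FV.s (FV.xp k)
    rw [show cap A B memN FV.s (FV.xp k) = 1 from rfl] at h
    simpa using h
  have hsumN : ∑ i, f FV.s (FV.N i) ≤ q := by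
    calc ∑ i, f FV.s (FV.N i) ≤ ∑ _i : Fin q, (1 : ℝ) :=
          Finset.sum_le_sum fun i _ => hcapN i
      _ = q := by simp
  have hsumXp : ∑ k, f FV.s (FV.xp k) ≤ n := by
    calc ∑ k, f FV.s (FV.xp k) ≤ ∑ _k : Fin n, (1 : ℝ) :=
          Finset.sum_le_sum fun k _ => hcapXp k
      _ = n := by simp
  -- saturation of the source edges
  have hNsat : ∀ i, f FV.s (FV.N i) = 1 := by
    intro i
    by_contra hne
    have hlt : f FV.s (FV.N i) < 1 := lt_of_le_of_ne (hcapN i) hne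
    have : ∑ i, f FV.s (FV.N i) < q := by
      calc ∑ i, f FV.s (FV.N i) < ∑ _i : Fin q, (1 : ℝ) :=
            Finset.sum_lt_sum (fun j _ => hcapN j) ⟨i, Finset.mem_univ i, hlt⟩
        _ = q := by simp
    rw [hvalue] at hval
    linarith
  have hXpsat : ∀ k, f FV.s (FV.xp k) = 1 := by
    intro k
    by_contra hne
    have hlt : f FV.s (FV.xp k) < 1 := lt_of_le_of_ne (hcapXp k) hne
    have : ∑ k, f FV.s (FV.xp k) < n := by
      calc ∑ k, f FV.s (FV.xp k) < ∑ _k : Fin n, (1 : ℝ) :=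
            Finset.sum_lt_sum (fun j _ => hcapXp j) ⟨k, Finset.mem_univ k, hlt⟩
        _ = n := by simp
    rw [hvalue] at hval
    linarith
  -- conservation at xp k : total outflow is 1, all into x/u vertices
  have hxpOut : ∀ k, (∑ r, f (FV.xp k) (FV.x r)) + ∑ j, f (FV.xp k) (FV.u j) = 1 := by
    intro k
    have hc := hcons (FV.xp k) (fun h => by cases h) (fun h => by cases h)
    have hin : ∑ a, f a (FV.xp k) = 1 := by
      have e := sum_fv (fun a => f a (FV.xp k))
      rw [e, hz FV.t (FV.xp k) rfl,
        Finset.sum_eq_zero (fun i _ => hz (FV.N i) (FV.xp k) rfl),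
        Finset.sum_eq_zero (fun r _ => hz (FV.xp r) (FV.xp k) rfl),
        Finset.sum_eq_zero (fun r _ => hz (FV.x r) (FV.xp k) rfl),
        Finset.sum_eq_zero (fun j _ => hz (FV.u j) (FV.xp k) rfl),
        Finset.sum_eq_zero (fun j _ => hz (FV.up j) (FV.xp k) rfl),
        hXpsat k]
      ring
    have hout : ∑ c, f (FV.xp k) c =
        (∑ r, f (FV.xp k) (FV.x r)) + ∑ j, f (FV.xp k) (FV.u j) := by
      have e := sum_fv (fun c => f (FV.xp k) c)
      rw [e, hz (FV.xp k) FV.s rfl, hz (FV.xp k) FV.t rfl,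
        Finset.sum_eq_zero (fun i _ => hz (FV.xp k) (FV.N i) rfl),
        Finset.sum_eq_zero (fun r _ => hz (FV.xp k) (FV.xp r) rfl),
        Finset.sum_eq_zero (fun j _ => hz (FV.xp k) (FV.up j) rfl)]
      ring
    rw [← hout, ← hc, hin]
  -- conservation at u j
  have huCons : ∀ j, ∑ k, f (FV.xp k) (FV.u j) = f (FV.u j) (FV.up j) := by
    intro j
    have hc := hcons (FV.u j) (fun h => by cases h) (fun h => by cases h)
    have hin : ∑ a, f a (FV.u j) = ∑ k, f (FV.xp k) (FV.u j) := by
      have e := sum_fv (fun a => f a (FV.u j))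
      rw [e, hz FV.s (FV.u j) rfl, hz FV.t (FV.u j) rfl,
        Finset.sum_eq_zero (fun i _ => hz (FV.N i) (FV.u j) rfl),
        Finset.sum_eq_zero (fun r _ => hz (FV.x r) (FV.u j) rfl),
        Finset.sum_eq_zero (fun j' _ => hz (FV.u j') (FV.u j) rfl),
        Finset.sum_eq_zero (fun j' _ => hz (FV.up j') (FV.u j) rfl)]
      ring
    have hout : ∑ c, f (FV.u j) c = f (FV.u j) (FV.up j) := by
      have e := sum_fv (fun c => f (FV.u j) c)
      rw [e, hz (FV.u j) FV.s rfl, hz (FV.u j) FV.t rfl,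
        Finset.sum_eq_zero (fun i _ => hz (FV.u j) (FV.N i) rfl),
        Finset.sum_eq_zero (fun r _ => hz (FV.u j) (FV.xp r) rfl),
        Finset.sum_eq_zero (fun r _ => hz (FV.u j) (FV.x r) rfl),
        Finset.sum_eq_zero (fun j' _ => hz (FV.u j) (FV.u j') rfl),
        Finset.sum_eq_single j (fun j' _ hj' => hz (FV.u j) (FV.up j') (by
          have hne : ¬ (j = j') := fun h => hj' h.symm
          simp [cap, hne])) (fun h => absurd (Finset.mem_univ j) h)]
      ring
    rw [← hin, hc, hout]
  -- conservation at up j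
  have hupCons : ∀ j, (∑ i, f (FV.N i) (FV.up j)) + f (FV.u j) (FV.up j)
      = f (FV.up j) FV.t := by
    intro j
    have hc := hcons (FV.up j) (fun h => by cases h) (fun h => by cases h)
    have hin : ∑ a, f a (FV.up j) =
        (∑ i, f (FV.N i) (FV.up j)) + f (FV.u j) (FV.up j) := by
      have e := sum_fv (fun a => f a (FV.up j))
      rw [e, hz FV.s (FV.up j) rfl, hz FV.t (FV.up j) rfl,
        Finset.sum_eq_zero (fun r _ => hz (FV.xp r) (FV.up j) rfl),
        Finset.sum_eq_zero (fun r _ => hz (FV.x r) (FV.up j) rfl),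
        Finset.sum_eq_zero (fun j' _ => hz (FV.up j') (FV.up j) rfl),
        Finset.sum_eq_single j (fun j' _ hj' => hz (FV.u j') (FV.up j) (by
          simp [cap, hj'])) (fun h => absurd (Finset.mem_univ j) h)]
      ring
    have hout : ∑ c, f (FV.up j) c = f (FV.up j) FV.t := by
      have e := sum_fv (fun c => f (FV.up j) c)
      rw [e, hz (FV.up j) FV.s rfl,
        Finset.sum_eq_zero (fun i _ => hz (FV.up j) (FV.N i) rfl),
        Finset.sum_eq_zero (fun r _ => hz (FV.up j) (FV.xp r) rfl),
        Finset.sum_eq_zero (fun r _ => hz (FV.up j) (FV.x r) rfl),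
        Finset.sum_eq_zero (fun j' _ => hz (FV.up j) (FV.u j') rfl),
        Finset.sum_eq_zero (fun j' _ => hz (FV.up j) (FV.up j') rfl)]
      ring
    rw [← hin, hc, hout]
  -- conservation at x r
  have hxCons : ∀ r, ∑ k, f (FV.xp k) (FV.x r) = f (FV.x r) FV.t := by
    intro r
    have hc := hcons (FV.x r) (fun h => by cases h) (fun h => by cases h)
    have hin : ∑ a, f a (FV.x r) = ∑ k, f (FV.xp k) (FV.x r) := by
      have e := sum_fv (fun a => f a (FV.x r))
      rw [e, hz FV.s (FV.x r) rfl, hz FV.t (FV.x r) rfl,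
        Finset.sum_eq_zero (fun i _ => hz (FV.N i) (FV.x r) rfl),
        Finset.sum_eq_zero (fun r' _ => hz (FV.x r') (FV.x r) rfl),
        Finset.sum_eq_zero (fun j _ => hz (FV.u j) (FV.x r) rfl),
        Finset.sum_eq_zero (fun j _ => hz (FV.up j) (FV.x r) rfl)]
      ring
    have hout : ∑ c, f (FV.x r) c = f (FV.x r) FV.t := by
      have e := sum_fv (fun c => f (FV.x r) c)
      rw [e, hz (FV.x r) FV.s rfl,
        Finset.sum_eq_zero (fun i _ => hz (FV.x r) (FV.N i) rfl),
        Finset.sum_eq_zero (fun r' _ => hz (FV.x r) (FV.xp r') rfl),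
        Finset.sum_eq_zero (fun r' _ => hz (FV.x r) (FV.x r') rfl),
        Finset.sum_eq_zero (fun j _ => hz (FV.x r) (FV.u j) rfl),
        Finset.sum_eq_zero (fun j _ => hz (FV.x r) (FV.up j) rfl)]
      ring
    rw [← hin, hc, hout]
  -- conservation at N i
  have hNCons : ∀ i, ∑ j, f (FV.N i) (FV.up j) = 1 := by
    intro i
    have hc := hcons (FV.N i) (fun h => by cases h) (fun h => by cases h)
    have hin : ∑ a, f a (FV.N i) = 1 := by
      have e := sum_fv (fun a => f a (FV.N i))
      rw [e, hz FV.t (FV.N i) rfl,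
        Finset.sum_eq_zero (fun i' _ => hz (FV.N i') (FV.N i) rfl),
        Finset.sum_eq_zero (fun r _ => hz (FV.xp r) (FV.N i) rfl),
        Finset.sum_eq_zero (fun r _ => hz (FV.x r) (FV.N i) rfl),
        Finset.sum_eq_zero (fun j _ => hz (FV.u j) (FV.N i) rfl),
        Finset.sum_eq_zero (fun j _ => hz (FV.up j) (FV.N i) rfl),
        hNsat i]
      ring
    have hout : ∑ c, f (FV.N i) c = ∑ j, f (FV.N i) (FV.up j) := by
      have e := sum_fv (fun c => f (FV.N i) c)
      rw [e, hz (FV.N i) FV.s rfl, hz (FV.N i) FV.t rfl,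
        Finset.sum_eq_zero (fun i' _ => hz (FV.N i) (FV.N i') rfl),
        Finset.sum_eq_zero (fun r _ => hz (FV.N i) (FV.xp r) rfl),
        Finset.sum_eq_zero (fun r _ => hz (FV.N i) (FV.x r) rfl),
        Finset.sum_eq_zero (fun j _ => hz (FV.N i) (FV.u j) rfl)]
      ring
    rw [← hout, ← hc, hin]
  -- positivity of selected input edges from positive flow on xp k → u j
  have hIpos : ∀ j : Fin m, 0 < f (FV.u j) (FV.up j) → 0 < f (FV.up j) FV.t := by
    intro j h
    have h2 : (0:ℝ) ≤ ∑ i, f (FV.N i) (FV.up j) :=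
      Finset.sum_nonneg fun i _ => hnn _ _
    have := hupCons j
    linarith
  refine ⟨⟨?_, ?_⟩, ?_⟩
  · -- every non-top-linked SCC reached by a selected input
    intro i
    have h1 := hNCons i
    have hex : ∃ j, 0 < f (FV.N i) (FV.up j) := by
      by_contra h
      push_neg at h
      have hzero : ∀ j ∈ Finset.univ, f (FV.N i) (FV.up j) = 0 :=
        fun j _ => le_antisymm (h j) (hnn _ _)
      rw [Finset.sum_eq_zero hzero] at h1
      norm_num at h1
    obtain ⟨j, hj⟩ := hex
    have hcpos : cap A B memN (FV.N i) (FV.up j) ≠ 0 := by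
      intro h0
      rw [hz _ _ h0] at hj
      exact lt_irrefl _ hj
    have hex2 : ∃ r, memN i r = true ∧ B r j = true := by
      by_contra hnex
      exact hcpos (by simp only [cap, if_neg hnex])
    obtain ⟨r, hr1, hr2⟩ := hex2
    have hupt : 0 < f (FV.up j) FV.t := by
      have h2 : f (FV.N i) (FV.up j) ≤ ∑ i', f (FV.N i') (FV.up j) :=
        Finset.single_le_sum (fun i' _ => hnn _ _) (Finset.mem_univ i)
      have h3 := hupCons j
      have h4 := hnn (FV.u j) (FV.up j)
      linarith
    exact ⟨j, r, hr1, by simp [hr2, hupt]⟩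
  · -- the matching, via Hall's theorem
    have hall : ∀ s : Finset (Fin n), s.card ≤ (s.biUnion (selT f)).card := by
      intro s
      have key : (s.card : ℝ) ≤ ((s.biUnion (selT f)).card : ℝ) := by
        calc (s.card : ℝ) = ∑ _k ∈ s, (1 : ℝ) := by simp
          _ = ∑ k ∈ s, ∑ l : Fin n ⊕ Fin m, f (FV.xp k) (Sum.elim FV.x FV.u l) := by
              refine Finset.sum_congr rfl fun k _ => ?_
              rw [Fintype.sum_sum_type]
              simp only [Sum.elim_inl, Sum.elim_inr]
              exact (hxpOut k).symm
          _ = ∑ l : Fin n ⊕ Fin m, ∑ k ∈ s, f (FV.xp k) (Sum.elim FV.x FV.u l) :=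
              Finset.sum_comm
          _ = ∑ l ∈ s.biUnion (selT f), ∑ k ∈ s, f (FV.xp k) (Sum.elim FV.x FV.u l) := by
              symm
              apply Finset.sum_subset (Finset.subset_univ _)
              intro l _ hl
              apply Finset.sum_eq_zero
              intro k hk
              by_contra hne
              have hpos : 0 < f (FV.xp k) (Sum.elim FV.x FV.u l) :=
                lt_of_le_of_ne (hnn _ _) (Ne.symm hne)
              exact hl (Finset.mem_biUnion.2 ⟨k, hk, by simp [selT, hpos]⟩)
          _ ≤ ∑ _l ∈ s.biUnion (selT f), (1 : ℝ) := by
              apply Finset.sum_le_sum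
              intro l _
              have h1 : ∑ k ∈ s, f (FV.xp k) (Sum.elim FV.x FV.u l)
                  ≤ ∑ k : Fin n, f (FV.xp k) (Sum.elim FV.x FV.u l) :=
                Finset.sum_le_sum_of_subset_of_nonneg (Finset.subset_univ _)
                  (fun k _ _ => hnn _ _)
              refine h1.trans ?_
              rcases l with r | j
              · simp only [Sum.elim_inl]
                rw [hxCons r]
                have h := hcap (FV.x r) FV.t
                rw [show cap A B memN (FV.x r) FV.t = 1 from rfl] at h
                simpa using h
              · simp only [Sum.elim_inr]
                rw [huCons j]
                have := hcap (FV.u j) (FV.up j)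
                have hle : (cap A B memN (FV.u j) (FV.up j) : ℝ) ≤ 1 := by
                  simp [cap]
                linarith
          _ = ((s.biUnion (selT f)).card : ℝ) := by simp
      exact_mod_cast key
    obtain ⟨M, hMinj, hM⟩ :=
      (Finset.all_card_le_biUnion_card_iff_exists_injective (selT f)).1 hall
    refine ⟨M, hMinj, fun k => ?_⟩
    have hk := hM k
    rw [selT, Finset.mem_filter] at hk
    have hkpos := hk.2
    rcases hMk : M k with r | j
    · rw [hMk] at hkpos
      simp only [Sum.elim_inl] at hkpos
      show A k r = true
      by_contra hA
      have : cap A B memN (FV.xp k) (FV.x r) = 0 := by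
        simp only [cap, if_neg hA]
      rw [hz _ _ this] at hkpos
      exact lt_irrefl _ hkpos
    · rw [hMk] at hkpos
      simp only [Sum.elim_inr] at hkpos
      have hB : B k j = true := by
        by_contra hB
        have : cap A B memN (FV.xp k) (FV.u j) = 0 := by
          simp only [cap, if_neg hB]
        rw [hz _ _ this] at hkpos
        exact lt_irrefl _ hkpos
      have hupos : 0 < f (FV.u j) (FV.up j) := by
        rw [← huCons j]
        have h2 : f (FV.xp k) (FV.u j) ≤ ∑ k', f (FV.xp k') (FV.u j) :=
          Finset.single_le_sum (fun k' _ => hnn _ _) (Finset.mem_univ k)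
        linarith
      have := hIpos j hupos
      show (B k j && decide (0 < f (FV.up j) FV.t)) = true
      simp [hB, this]
  · -- cost equality
    have hrow : ∀ a : FV n m q,
        (∑ c, if 0 < f a c then cost p a c else 0)
          = if 0 < f a FV.t then cost p a FV.t else 0 := by
      intro a
      apply Finset.sum_eq_single
      · intro c _ hc
        have hc0 : cost p a c = 0 := by
          cases a <;> cases c <;> first | rfl | exact absurd rfl hc
        simp [hc0]
      · intro h
        exact absurd (Finset.mem_univ _) h
    rw [fixedCost, Finset.sum_congr rfl (fun a _ => hrow a)]
    have e := sum_fv (fun a => if 0 < f a FV.t then cost p a FV.t else 0)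
    rw [e, Finset.sum_filter]
    simp [cost]
end
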